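/- Let W be a graph with two vertices v₁, v₂ such that all v₁–v₂ paths in W have odd length. Let S₁, S₂ be stable sets in W with S₁ ⊇ {v₁,v₂} and S₂ ∩ {v₁,v₂} = ∅. Then there exist stable sets S₃, S₄ in W with S₃ ∩ {v₁,v₂} = {v₁}, S₄ ∩ {v₁,v₂} = {v₂}, S₁ ∪ S₂ = S₃ ∪ S₄, and S₁ ∩ S₂ = S₃ ∩ S₄. -/

import Mathlib

open SimpleGraph

/-- A stable set: no two of its vertices are adjacent. -/
def IsStable {V : Type*} (G : SimpleGraph V) (S : Set V) : Prop :=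
  ∀ u ∈ S, ∀ v ∈ S, ¬ G.Adj u v

/-- if all `v₁`–`v₂` paths in `W` are odd, `S₁` is a stable set containing
both `v₁, v₂`, and `S₂` is a stable set containing neither, then there are stable sets
`S₃, S₄` meeting `{v₁,v₂}` exactly in `{v₁}` resp. `{v₂}`, with the same union and
intersection as `S₁, S₂`. -/
theorem stmt5 {V : Type*} (W : SimpleGraph V) (v₁ v₂ : V)
    (hodd : ∀ p : W.Walk v₁ v₂, p.IsPath → Odd p.length)
    (S₁ S₂ : Set V) (h₁ : IsStable W S₁) (h₂ : IsStable W S₂)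
    (h₁v : v₁ ∈ S₁ ∧ v₂ ∈ S₁) (h₂v : S₂ ∩ {v₁, v₂} = ∅) :
    ∃ S₃ S₄ : Set V, IsStable W S₃ ∧ IsStable W S₄ ∧
      S₃ ∩ {v₁, v₂} = {v₁} ∧ S₄ ∩ {v₁, v₂} = {v₂} ∧
      S₁ ∪ S₂ = S₃ ∪ S₄ ∧ S₁ ∩ S₂ = S₃ ∩ S₄ := by
  classical
  obtain ⟨hv₁S₁, hv₂S₁⟩ := h₁v
  have hv₁S₂ : v₁ ∉ S₂ := fun h => by
    have : v₁ ∈ S₂ ∩ ({v₁, v₂} : Set V) := ⟨h, Or.inl rfl⟩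
    simp [h₂v] at this
  have hv₂S₂ : v₂ ∉ S₂ := fun h => by
    have : v₂ ∈ S₂ ∩ ({v₁, v₂} : Set V) := ⟨h, Or.inr rfl⟩
    simp [h₂v] at this
  -- the symmetric difference
  set T : Set V := (S₁ \ S₂) ∪ (S₂ \ S₁) with hT
  -- subgraph induced on T
  let G' : SimpleGraph V :=
    { Adj := fun u v => W.Adj u v ∧ u ∈ T ∧ v ∈ T
      symm := ⟨fun u v h => ⟨h.1.symm, h.2.2, h.2.1⟩⟩
      loopless := ⟨fun u h => W.loopless.irrefl u h.1⟩ }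
  have hG'le : G' ≤ W := fun u v h => h.1
  -- alternation: along any G'-walk, membership in S₁ alternates
  have parity : ∀ {a b : V} (p : G'.Walk a b), Even p.length ↔ (a ∈ S₁ ↔ b ∈ S₁) := by
    intro a b p
    induction p with
    | nil => simp
    | @cons a c b h p ih =>
      obtain ⟨hW, haT, hcT⟩ := h
      have halt : a ∈ S₁ ↔ c ∉ S₁ := by
        constructor
        · intro ha hc; exact h₁ a ha c hc hW
        · intro hc
          rcases haT with ⟨ha, _⟩ | ⟨ha2, ha1⟩
          · exact ha
          · rcases hcT with ⟨hc1, _⟩ | ⟨hc2, _⟩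
            · exact absurd hc1 hc
            · exact absurd hW (h₂ a ha2 c hc2)
      simp only [Walk.length_cons, Nat.even_add_one, ih]
      tauto
  -- component of v₂
  set C : Set V := {x | G'.Reachable v₂ x} with hC
  have hv₂C : v₂ ∈ C := Set.mem_setOf.mpr (Reachable.refl v₂)
  have hv₁C : v₁ ∉ C := by
    intro h
    obtain ⟨w⟩ := (Set.mem_setOf.mp h)
    have hp : w.toPath.1.IsPath := w.toPath.2
    have hq : (w.toPath.1.reverse.mapLe hG'le).IsPath := (hp.reverse).mapLe hG'le
    have hodd' := hodd _ hq
    have hlen : (w.toPath.1.reverse.mapLe hG'le).length = w.toPath.1.length := by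
      simp [Walk.mapLe, Walk.length_map]
    have heven : Even w.toPath.1.length :=
      (parity w.toPath.1).mpr (by tauto)
    rw [hlen] at hodd'
    exact (Nat.not_even_iff_odd.mpr hodd') heven
  -- reachability extends along G'-edges
  have hCadj : ∀ {x y : V}, x ∈ C → G'.Adj x y → y ∈ C := by
    intro x y hx hxy
    exact Set.mem_setOf.mpr ((Set.mem_setOf.mp hx).trans hxy.reachable)
  refine ⟨(S₁ \ C) ∪ (S₂ ∩ C), (S₂ \ C) ∪ (S₁ ∩ C), ?_, ?_, ?_, ?_, ?_, ?_⟩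
  · -- S₃ stable
    rintro u hu v hv hW
    rcases hu with ⟨hu1, huC⟩ | ⟨hu2, huC⟩ <;> rcases hv with ⟨hv1, hvC⟩ | ⟨hv2, hvC⟩
    · exact h₁ u hu1 v hv1 hW
    · have hu2 : u ∉ S₂ := fun h => h₂ u h v hv2 hW
      have hv1 : v ∉ S₁ := fun h => h₁ u hu1 v h hW
      have : G'.Adj v u := ⟨hW.symm, Or.inr ⟨hv2, hv1⟩, Or.inl ⟨hu1, hu2⟩⟩
      exact huC (hCadj hvC this)
    · have hv2' : v ∉ S₂ := fun h => h₂ u hu2 v h hW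
      have hu1 : u ∉ S₁ := fun h => h₁ u h v hv1 hW
      have : G'.Adj u v := ⟨hW, Or.inr ⟨hu2, hu1⟩, Or.inl ⟨hv1, hv2'⟩⟩
      exact hvC (hCadj huC this)
    · exact h₂ u hu2 v hv2 hW
  · -- S₄ stable
    rintro u hu v hv hW
    rcases hu with ⟨hu2, huC⟩ | ⟨hu1, huC⟩ <;> rcases hv with ⟨hv2, hvC⟩ | ⟨hv1, hvC⟩
    · exact h₂ u hu2 v hv2 hW
    · have hu1 : u ∉ S₁ := fun h => h₁ u h v hv1 hW
      have hv2' : v ∉ S₂ := fun h => h₂ u hu2 v h hW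
      have : G'.Adj v u := ⟨hW.symm, Or.inl ⟨hv1, hv2'⟩, Or.inr ⟨hu2, hu1⟩⟩
      exact huC (hCadj hvC this)
    · have hv1 : v ∉ S₁ := fun h => h₁ u hu1 v h hW
      have hu2' : u ∉ S₂ := fun h => h₂ u h v hv2 hW
      have : G'.Adj u v := ⟨hW, Or.inl ⟨hu1, hu2'⟩, Or.inr ⟨hv2, hv1⟩⟩
      exact hvC (hCadj huC this)
    · exact h₁ u hu1 v hv1 hW
  · -- S₃ ∩ {v₁, v₂} = {v₁}
    ext x
    simp only [Set.mem_inter_iff, Set.mem_union, Set.mem_diff, Set.mem_insert_iff,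
      Set.mem_singleton_iff]
    constructor
    · rintro ⟨h, rfl | rfl⟩
      · rfl
      · rcases h with ⟨_, hc⟩ | ⟨h2, _⟩
        · exact absurd hv₂C hc
        · exact absurd h2 hv₂S₂
    · rintro rfl
      exact ⟨Or.inl ⟨hv₁S₁, hv₁C⟩, Or.inl rfl⟩
  · -- S₄ ∩ {v₁, v₂} = {v₂}
    ext x
    simp only [Set.mem_inter_iff, Set.mem_union, Set.mem_diff, Set.mem_insert_iff,
      Set.mem_singleton_iff]
    constructor
    · rintro ⟨h, rfl | rfl⟩
      · rcases h with ⟨h2, _⟩ | ⟨_, hc⟩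
        · exact absurd h2 hv₁S₂
        · exact absurd hc hv₁C
      · rfl
    · rintro rfl
      exact ⟨Or.inr ⟨hv₂S₁, hv₂C⟩, Or.inr rfl⟩
  · ext x
    by_cases hx : x ∈ C <;> simp only [Set.mem_union, Set.mem_diff, Set.mem_inter_iff] <;> tauto
  · ext x
    by_cases hx : x ∈ C <;> simp only [Set.mem_union, Set.mem_diff, Set.mem_inter_iff] <;> tauto
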